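/- A rank-one Hankel operator on H² is a scalar multiple of the rank-one operator k_{ω̄} ⊗ k_ω for some ω ∈ 𝔻: if H_φ has rank one, then there exist ω ∈ 𝔻 and a constant c with H_φ = c (k_{ω̄} ⊗ k_ω), where k_ω(z) = 1/(1 − ω̄z). Consequently, if H_{φ̄}^* H_{φ̄} = H_{z̄}^* H_{z̄} for φ ∈ H², then φ = e^{iθ} z + β for some θ ∈ [0,2π) and β ∈ ℂ. -/

import Mathlib

open MeasureTheory Complex Real InnerProductSpace Submodule

set_option maxHeartbeats 1000000
set_option synthInstance.maxHeartbeats 200000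

noncomputable section

namespace BlockToeplitz

instance fact2pi : Fact (0 < 2 * π) := ⟨by positivity⟩

/-- The unit circle, as the additive circle `ℝ / 2πℤ`. -/
abbrev 𝕋 : Type := AddCircle (2 * π)

/-- Normalized Haar (Lebesgue) measure on the circle. -/
abbrev μ𝕋 : Measure 𝕋 := AddCircle.haarAddCircle

section Pointwise

variable {E F : Type*} [NormedAddCommGroup E] [NormedSpace ℂ E]
  [NormedAddCommGroup F] [NormedSpace ℂ F]

theorem memLp_pointwise {Φ : 𝕋 → (E →L[ℂ] F)} (hm : AEStronglyMeasurable Φ μ𝕋)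
    {C : ℝ} (hC : ∀ x, ‖Φ x‖ ≤ C) (f : Lp E 2 μ𝕋) :
    MemLp (fun x => Φ x (f x)) 2 μ𝕋 := by
  refine MemLp.of_le_mul (c := C) (Lp.memLp f) ?_ ?_
  · exact isBoundedBilinearMap_apply.continuous.comp_aestronglyMeasurable
      (hm.prodMk (Lp.aestronglyMeasurable f))
  · refine Filter.Eventually.of_forall fun x => ?_
    exact (ContinuousLinearMap.le_opNorm _ _).trans
      (mul_le_mul_of_nonneg_right (hC x) (norm_nonneg _))

/-- The operator on `L²` of pointwise application of a uniformly bounded family of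
operators (e.g. multiplication by an `L^∞` matrix function). -/
def pointwiseCLM (Φ : 𝕋 → (E →L[ℂ] F)) (hm : AEStronglyMeasurable Φ μ𝕋)
    {C : ℝ} (hC : ∀ x, ‖Φ x‖ ≤ C) : Lp E 2 μ𝕋 →L[ℂ] Lp F 2 μ𝕋 :=
  LinearMap.mkContinuous
    { toFun := fun f => (memLp_pointwise hm hC f).toLp _
      map_add' := fun f g => by
        rw [← MemLp.toLp_add (memLp_pointwise hm hC f) (memLp_pointwise hm hC g)]
        refine MemLp.toLp_congr _ _ ?_
        filter_upwards [Lp.coeFn_add f g] with x hx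
        simp only [hx, Pi.add_apply, map_add]
      map_smul' := fun c f => by
        try dsimp only
        rw [RingHom.id_apply, ← MemLp.toLp_const_smul c (memLp_pointwise hm hC f)]
        refine MemLp.toLp_congr _ _ ?_
        filter_upwards [Lp.coeFn_smul c f] with x hx
        simp only [hx, Pi.smul_apply, ContinuousLinearMap.map_smul] }
    (max C 0)
    (by
      intro f
      simp only [LinearMap.coe_mk, AddHom.coe_mk]
      rw [Lp.norm_toLp]
      have hb : eLpNorm (fun x => Φ x (f x)) 2 μ𝕋
          ≤ ENNReal.ofReal (max C 0) * eLpNorm (f : 𝕋 → E) 2 μ𝕋 := by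
        refine eLpNorm_le_mul_eLpNorm_of_ae_le_mul ?_ 2
        refine Filter.Eventually.of_forall fun x => ?_
        exact (ContinuousLinearMap.le_opNorm _ _).trans
          (mul_le_mul_of_nonneg_right ((hC x).trans (le_max_left _ _)) (norm_nonneg _))
      calc (eLpNorm (fun x => Φ x (f x)) 2 μ𝕋).toReal
          ≤ (ENNReal.ofReal (max C 0) * eLpNorm (f : 𝕋 → E) 2 μ𝕋).toReal := by
            refine ENNReal.toReal_mono ?_ hb
            exact ENNReal.mul_ne_top ENNReal.ofReal_ne_top (Lp.eLpNorm_ne_top f)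
        _ = max C 0 * ‖f‖ := by
            rw [ENNReal.toReal_mul, ENNReal.toReal_ofReal (le_max_right C 0), Lp.norm_def])

@[simp] theorem pointwiseCLM_apply (Φ : 𝕋 → (E →L[ℂ] F)) (hm : AEStronglyMeasurable Φ μ𝕋)
    {C : ℝ} (hC : ∀ x, ‖Φ x‖ ≤ C) (f : Lp E 2 μ𝕋) :
    pointwiseCLM Φ hm hC f = (memLp_pointwise hm hC f).toLp _ := rfl

end Pointwise

end BlockToeplitz

namespace BlockToeplitz
open scoped ComplexConjugate

variable {ι : Type} [Fintype ι]

/-- `ℂ^ι`. -/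
abbrev V (ι : Type) [Fintype ι] : Type := EuclideanSpace ℂ ι

/-- The space `L²(𝕋, ℂ^ι)`. -/
abbrev L2 (ι : Type) [Fintype ι] : Type := Lp (V ι) 2 μ𝕋

/-- The vector-valued trigonometric monomial `z^k ⊗ e_i` as an element of `L²`. -/
def fourierV (ι : Type) [Fintype ι] [DecidableEq ι] (k : ℤ) (i : ι) : L2 ι :=
  (ContinuousMap.toLp (E := V ι) 2 μ𝕋 ℂ)
    ⟨fun x => fourier k x • EuclideanSpace.single i 1,
      (map_continuous (fourier k)).smul continuous_const⟩

/-- The span of the analytic-negative monomials. -/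
def negSpan (ι : Type) [Fintype ι] : Submodule ℂ (L2 ι) :=
  Submodule.span ℂ
    {f | ∃ k : ℤ, k < 0 ∧ ∃ i : ι, f = @fourierV ι _ (Classical.decEq ι) k i}

/-- The vector-valued Hardy space `H²(𝕋, ℂ^ι)`, i.e. the orthogonal complement in
`L²` of the span of the monomials `z^k ⊗ e_i`, `k < 0`. -/
def hardy (ι : Type) [Fintype ι] : Submodule ℂ (L2 ι) := (negSpan ι)ᗮ

/-- The Hardy space as a Hilbert space. -/
abbrev H2 (ι : Type) [Fintype ι] : Type := ↥(hardy ι)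

instance : CompleteSpace (H2 ι) := by
  unfold H2 hardy; infer_instance

instance : HasOrthogonalProjection (hardy ι) := by
  unfold hardy; infer_instance

/-- The orthogonal projection `P` of `L²` onto `H²`. -/
def hardyProj (ι : Type) [Fintype ι] : L2 ι →L[ℂ] H2 ι :=
  orthogonalProjection (hardy ι)

/-- A matrix-valued `L^∞` function on the circle (the matrices being identified with the
operators on `ℂ^ι` that they induce): a bounded measurable family of operators. -/
structure Symbol (ι : Type) [Fintype ι] : Type where
  toFun : 𝕋 → (V ι →L[ℂ] V ι)
  meas : AEStronglyMeasurable toFun μ𝕋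
  bound : ℝ
  le_bound : ∀ x, ‖toFun x‖ ≤ bound

instance : CoeFun (Symbol ι) (fun _ => 𝕋 → (V ι →L[ℂ] V ι)) := ⟨Symbol.toFun⟩

/-- The multiplication operator `f ↦ Φ f` on `L²(𝕋, ℂ^ι)`. -/
def Symbol.mulLp (Φ : Symbol ι) : L2 ι →L[ℂ] L2 ι :=
  pointwiseCLM Φ.toFun Φ.meas Φ.le_bound

/-- Pointwise product (composition) of two matrix symbols. -/
def Symbol.mul (Φ Ψ : Symbol ι) : Symbol ι where
  toFun := fun x => (Φ x).comp (Ψ x)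
  meas := isBoundedBilinearMap_comp.continuous.comp_aestronglyMeasurable
    (Φ.meas.prodMk Ψ.meas)
  bound := max Φ.bound 0 * max Ψ.bound 0
  le_bound := fun x => (ContinuousLinearMap.opNorm_comp_le _ _).trans <|
    mul_le_mul ((Φ.le_bound x).trans (le_max_left _ _))
      ((Ψ.le_bound x).trans (le_max_left _ _)) (norm_nonneg _) (le_max_right _ _)

/-- The pointwise adjoint symbol `Φ*` (conjugate transpose). -/
def Symbol.star (Φ : Symbol ι) : Symbol ι where
  toFun := fun x => ContinuousLinearMap.adjoint (Φ x)
  meas := (ContinuousLinearMap.adjoint (𝕜 := ℂ) (E := V ι)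
      (F := V ι)).continuous.comp_aestronglyMeasurable Φ.meas
  bound := Φ.bound
  le_bound := fun x =>
    le_trans
      (le_of_eq ((ContinuousLinearMap.adjoint (𝕜 := ℂ) (E := V ι) (F := V ι)).norm_map (Φ.toFun x)))
      (Φ.le_bound x)

end BlockToeplitz

namespace BlockToeplitz
open scoped ComplexConjugate

theorem norm_fourier_apply (k : ℤ) (x : 𝕋) : ‖fourier k x‖ = 1 := by
  rw [fourier_apply]; exact Circle.norm_coe _

section CompNeg

variable {E : Type*} [NormedAddCommGroup E] [NormedSpace ℂ E]

/-- The composition operator `f(z) ↦ f(z̄)` (i.e. `x ↦ -x` on the additive circle)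
on `L²`. -/
def compNeg (E : Type*) [NormedAddCommGroup E] [NormedSpace ℂ E] :
    Lp E 2 μ𝕋 →L[ℂ] Lp E 2 μ𝕋 :=
  LinearMap.mkContinuous
    { toFun := fun f =>
        Lp.compMeasurePreserving (E := E) (p := 2) Neg.neg
          (Measure.measurePreserving_neg μ𝕋) f
      map_add' := fun f g => by
        exact map_add (Lp.compMeasurePreserving Neg.neg (Measure.measurePreserving_neg μ𝕋)) f g
      map_smul' := fun c f => by
        apply Lp.ext
        have h1 := Lp.coeFn_compMeasurePreserving (μ := μ𝕋) (c • f)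
          (Measure.measurePreserving_neg μ𝕋)
        have h2 := Lp.coeFn_compMeasurePreserving (μ := μ𝕋) f
          (Measure.measurePreserving_neg μ𝕋)
        have h3 : ((c • f : Lp E 2 μ𝕋) : 𝕋 → E) ∘ Neg.neg
            =ᵐ[μ𝕋] ((c • (f : 𝕋 → E)) ∘ Neg.neg) :=
          (Measure.measurePreserving_neg μ𝕋).quasiMeasurePreserving.ae_eq_comp
            (Lp.coeFn_smul c f)
        filter_upwards [h1, h3,
          Lp.coeFn_smul c (Lp.compMeasurePreserving (E := E) (p := 2) Neg.neg
            (Measure.measurePreserving_neg μ𝕋) f), h2]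
          with x hx1 hx3 hx4 hx2
        rw [RingHom.id_apply, hx1, hx3, hx4]
        show c • (f : 𝕋 → E) (-x)
            = c • (Lp.compMeasurePreserving (E := E) (p := 2) Neg.neg
                (Measure.measurePreserving_neg μ𝕋) f : 𝕋 → E) x
        rw [hx2]
        rfl }
    1
    (fun f => by
      simpa using (Lp.norm_compMeasurePreserving (E := E) (p := 2) f
        (Measure.measurePreserving_neg μ𝕋)).le)

/-- The unitary operator `J f (z) = z̄ f(z̄)` on `L²`. -/
def Jop (E : Type*) [NormedAddCommGroup E] [NormedSpace ℂ E] :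
    Lp E 2 μ𝕋 →L[ℂ] Lp E 2 μ𝕋 :=
  (pointwiseCLM (fun x => (fourier (-1) x : ℂ) • (1 : E →L[ℂ] E))
      (((map_continuous (fourier (-1))).smul continuous_const).aestronglyMeasurable)
      (C := 1)
      (fun x => by
        show ‖(fourier (-1)) x • (1 : E →L[ℂ] E)‖ ≤ 1
        rw [norm_smul ((fourier (-1)) x) (1 : E →L[ℂ] E), norm_fourier_apply, one_mul,
          ContinuousLinearMap.one_def]
        exact ContinuousLinearMap.norm_id_le)).comp (compNeg E)

end CompNeg

end BlockToeplitz

namespace BlockToeplitz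
open scoped ComplexConjugate

variable {ι : Type} [Fintype ι]

/-- The pointwise transposed-conjugated-reflected symbol `Φ̃(z) := Φ(z̄)*`. -/
def Symbol.tilde (Φ : Symbol ι) : Symbol ι where
  toFun := fun x => ContinuousLinearMap.adjoint (Φ.toFun (-x))
  meas := (ContinuousLinearMap.adjoint (𝕜 := ℂ) (E := V ι)
      (F := V ι)).continuous.comp_aestronglyMeasurable
    (Φ.meas.comp_quasiMeasurePreserving
      (Measure.measurePreserving_neg μ𝕋).quasiMeasurePreserving)
  bound := Φ.bound
  le_bound := fun x =>
    le_trans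
      (le_of_eq
        ((ContinuousLinearMap.adjoint (𝕜 := ℂ) (E := V ι) (F := V ι)).norm_map (Φ.toFun (-x))))
      (Φ.le_bound (-x))

/-- A matrix symbol belongs to `H^∞` iff multiplication by it leaves the Hardy space
invariant. -/
def Symbol.MemHinf (Φ : Symbol ι) : Prop :=
  ∀ f : L2 ι, f ∈ hardy ι → Φ.mulLp f ∈ hardy ι

/-- A matrix `H^∞` symbol is inner if `Θ(z)*Θ(z) = I` a.e. -/
def Symbol.IsInner (Φ : Symbol ι) : Prop :=
  Φ.MemHinf ∧ ∀ᵐ x ∂μ𝕋, (ContinuousLinearMap.adjoint (Φ.toFun x)).comp (Φ.toFun x) = 1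

/-- The block Toeplitz operator `T_Φ = P (Φ ·)` on the vector Hardy space. -/
def toeplitz (Φ : Symbol ι) : H2 ι →L[ℂ] H2 ι :=
  (hardyProj ι).comp (Φ.mulLp.comp (hardy ι).subtypeL)

/-- The block Hankel operator `H_Φ = J P^⊥ (Φ ·)`, viewed as an operator from `H²` to `H²`
(its image indeed lies in `H²`). -/
def hankel (Φ : Symbol ι) : H2 ι →L[ℂ] H2 ι :=
  (hardyProj ι).comp <|
    (Jop (V ι)).comp <|
      (ContinuousLinearMap.id ℂ (L2 ι) - (hardy ι).subtypeL.comp (hardyProj ι)).comp <|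
        Φ.mulLp.comp (hardy ι).subtypeL

/-- The image `Θ · H²` of the Hardy space under multiplication by a symbol. -/
def Symbol.rangeH2 (Φ : Symbol ι) : Submodule ℂ (L2 ι) :=
  (hardy ι).map (Φ.mulLp : L2 ι →ₗ[ℂ] L2 ι)

/-- The model space `H(Θ) := H² ⊖ Θ H²`. -/
def modelSpace (Θ : Symbol ι) : Submodule ℂ (L2 ι) :=
  hardy ι ⊓ (Θ.rangeH2)ᗮ

/-- A scalar-valued `L^∞` function on the circle. -/
structure SymbolS : Type where
  toFun : 𝕋 → ℂ
  meas : AEStronglyMeasurable toFun μ𝕋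
  bound : ℝ
  le_bound : ∀ x, ‖toFun x‖ ≤ bound

instance : CoeFun SymbolS (fun _ => 𝕋 → ℂ) := ⟨SymbolS.toFun⟩

/-- Scalar symbols embed into matrix symbols as `φ I_n`. -/
def SymbolS.toMatrix (φ : SymbolS) (ι : Type) [Fintype ι] : Symbol ι where
  toFun := fun x => φ.toFun x • (1 : V ι →L[ℂ] V ι)
  meas := φ.meas.smul aestronglyMeasurable_const
  bound := φ.bound
  le_bound := fun x => by
    have h0 : (0 : ℝ) ≤ φ.bound := le_trans (norm_nonneg _) (φ.le_bound 0)
    calc ‖φ.toFun x • (1 : V ι →L[ℂ] V ι)‖ ≤ ‖φ.toFun x‖ * ‖(1 : V ι →L[ℂ] V ι)‖ :=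
          ContinuousLinearMap.opNorm_smul_le _ _
      _ ≤ φ.bound * 1 := by
          refine mul_le_mul (φ.le_bound x) ?_ (norm_nonneg _) h0
          rw [ContinuousLinearMap.one_def]; exact ContinuousLinearMap.norm_id_le
      _ = φ.bound := mul_one _

/-- The scalar-valued `L²` space of the circle. -/
abbrev L2S : Type := Lp ℂ 2 μ𝕋

/-- The span of the negative trigonometric monomials. -/
def negSpanS : Submodule ℂ L2S :=
  Submodule.span ℂ {f | ∃ k : ℤ, k < 0 ∧ f = fourierLp 2 k}

/-- The scalar Hardy space `H²(𝕋)`. -/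
def hardyS : Submodule ℂ L2S := negSpanSᗮ

/-- The scalar Hardy space as a Hilbert space. -/
abbrev H2S : Type := ↥hardyS

instance : CompleteSpace H2S := by unfold H2S hardyS; infer_instance

instance : HasOrthogonalProjection hardyS := by unfold hardyS; infer_instance

/-- The Szegő (Riesz) projection `P : L² → H²`. -/
def hardyProjS : L2S →L[ℂ] H2S := orthogonalProjection hardyS

/-- Multiplication by a scalar `L^∞` function, as an operator on `L²(𝕋)`. -/
def SymbolS.mulLp (φ : SymbolS) : L2S →L[ℂ] L2S :=
  pointwiseCLM (fun x => φ.toFun x • (1 : ℂ →L[ℂ] ℂ))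
    (φ.meas.smul aestronglyMeasurable_const)
    (C := φ.bound)
    (fun x => by
      calc ‖φ.toFun x • (1 : ℂ →L[ℂ] ℂ)‖ ≤ ‖φ.toFun x‖ * ‖(1 : ℂ →L[ℂ] ℂ)‖ :=
            ContinuousLinearMap.opNorm_smul_le _ _
        _ = ‖φ.toFun x‖ := by rw [norm_one, mul_one]
        _ ≤ φ.bound := φ.le_bound x)

/-- The scalar Toeplitz operator `T_φ` on `H²`. -/
def toeplitzS (φ : SymbolS) : H2S →L[ℂ] H2S :=
  hardyProjS.comp (φ.mulLp.comp hardyS.subtypeL)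

/-- The scalar Hankel operator `H_φ = J P^⊥ (φ ·)` on `H²`. -/
def hankelS (φ : SymbolS) : H2S →L[ℂ] H2S :=
  hardyProjS.comp <|
    (Jop ℂ).comp <|
      (ContinuousLinearMap.id ℂ L2S - hardyS.subtypeL.comp hardyProjS).comp <|
        φ.mulLp.comp hardyS.subtypeL

/-- Pointwise product of scalar symbols. -/
def SymbolS.mul (φ ψ : SymbolS) : SymbolS where
  toFun := fun x => φ.toFun x * ψ.toFun x
  meas := φ.meas.mul ψ.meas
  bound := max φ.bound 0 * max ψ.bound 0
  le_bound := fun x => by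
    rw [norm_mul]
    exact mul_le_mul ((φ.le_bound x).trans (le_max_left _ _))
      ((ψ.le_bound x).trans (le_max_left _ _)) (norm_nonneg _) (le_max_right _ _)

/-- The complex-conjugate symbol `φ̄`. -/
def SymbolS.conj (φ : SymbolS) : SymbolS where
  toFun := fun x => conj (φ.toFun x)
  meas := Complex.continuous_conj.comp_aestronglyMeasurable φ.meas
  bound := φ.bound
  le_bound := fun x => le_trans (le_of_eq (RCLike.norm_conj _)) (φ.le_bound x)

/-- The reflected conjugate symbol `φ̃(z) := conj (φ(z̄))`. -/
def SymbolS.tilde (φ : SymbolS) : SymbolS where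
  toFun := fun x => conj (φ.toFun (-x))
  meas := Complex.continuous_conj.comp_aestronglyMeasurable
    (φ.meas.comp_quasiMeasurePreserving
      (Measure.measurePreserving_neg μ𝕋).quasiMeasurePreserving)
  bound := φ.bound
  le_bound := fun x => le_trans (le_of_eq (RCLike.norm_conj _)) (φ.le_bound (-x))

/-- A scalar symbol is in `H^∞` iff multiplication by it preserves `H²`. -/
def SymbolS.MemHinf (φ : SymbolS) : Prop :=
  ∀ f : L2S, f ∈ hardyS → φ.mulLp f ∈ hardyS

/-- A scalar inner function: an `H^∞` function which is unimodular a.e. on the circle. -/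
def SymbolS.IsInner (φ : SymbolS) : Prop :=
  φ.MemHinf ∧ ∀ᵐ x ∂μ𝕋, ‖φ.toFun x‖ = 1

/-- The image `θ · H²` of the Hardy space under a scalar multiplication operator. -/
def SymbolS.rangeH2 (φ : SymbolS) : Submodule ℂ L2S :=
  hardyS.map (φ.mulLp : L2S →ₗ[ℂ] L2S)

/-- The scalar model space `H(θ) = H² ⊖ θH²`. -/
def modelSpaceS (θ : SymbolS) : Submodule ℂ L2S :=
  hardyS ⊓ (θ.rangeH2)ᗮ

/-- The coordinate function `z` on the circle (i.e. `x ↦ e^{ix}`). -/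
def circleCoord : 𝕋 → ℂ := fun x => fourier 1 x

/-- The symbol `z` of the unilateral shift. -/
def shiftSymbolS : SymbolS where
  toFun := circleCoord
  meas := (map_continuous (fourier 1)).aestronglyMeasurable
  bound := 1
  le_bound := fun x => le_of_eq (norm_fourier_apply 1 x)

/-- The symbol `z̄`. -/
def coshiftSymbolS : SymbolS where
  toFun := fun x => fourier (-1) x
  meas := (map_continuous (fourier (-1))).aestronglyMeasurable
  bound := 1
  le_bound := fun x => le_of_eq (norm_fourier_apply (-1) x)

/-- An operator on a complex Hilbert space is hyponormal if its self-commutator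
`[T*, T] = T*T - TT*` is a positive operator. -/
def Hyponormal {H : Type*} [NormedAddCommGroup H] [InnerProductSpace ℂ H] [CompleteSpace H]
    (T : H →L[ℂ] H) : Prop :=
  (ContinuousLinearMap.adjoint T ∘L T - T ∘L ContinuousLinearMap.adjoint T).IsPositive

/-- A Blaschke factor `b_a(z) = (z - a)/(1 - āz)`. -/
def blaschke (a z : ℂ) : ℂ := (z - a) / (1 - conj a * z)

end BlockToeplitz

namespace BlockToeplitz
open scoped ComplexConjugate

/-- A bounded measurable function lies in `L²` of the circle. -/
theorem SymbolS.memLp2 (φ : SymbolS) : MemLp φ.toFun 2 μ𝕋 :=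
  (memLp_top_of_bound φ.meas φ.bound
    (Filter.Eventually.of_forall φ.le_bound)).mono_exponent le_top

/-- The Szegő reproducing kernel `k_ω(z) = (1 - ω̄ z)⁻¹`. -/
def szegoKernel (ω : ℂ) : 𝕋 → ℂ := fun x => (1 - conj ω * circleCoord x)⁻¹

theorem szegoKernel_memLp2 (ω : ℂ) (hω : ‖ω‖ < 1) : MemLp (szegoKernel ω) 2 μ𝕋 := by
  have hne : ∀ x : 𝕋, (1 - conj ω * circleCoord x) ≠ 0 := by
    intro x h
    have h1 : ‖conj ω * circleCoord x‖ < 1 := by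
      rw [norm_mul, RCLike.norm_conj]
      simpa [circleCoord, norm_fourier_apply, Circle.norm_coe] using hω
    have h2 : (1 : ℂ) = conj ω * circleCoord x := by
      rwa [sub_eq_zero] at h
    rw [← h2] at h1
    simp at h1
  have hcont : Continuous (szegoKernel ω) := by
    refine Continuous.inv₀ ?_ hne
    exact continuous_const.sub (continuous_const.mul (map_continuous (fourier 1)))
  refine MemLp.mono_exponent (q := ⊤) ?_ le_top
  refine memLp_top_of_bound hcont.aestronglyMeasurable ((1 - ‖ω‖)⁻¹) ?_
  refine Filter.Eventually.of_forall fun x => ?_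
  have hb : 1 - ‖ω‖ ≤ ‖1 - conj ω * circleCoord x‖ := by
    calc 1 - ‖ω‖ = ‖(1 : ℂ)‖ - ‖conj ω * circleCoord x‖ := by
          rw [norm_one, norm_mul, RCLike.norm_conj]
          simp [circleCoord, norm_fourier_apply, Circle.norm_coe]
      _ ≤ ‖1 - conj ω * circleCoord x‖ := norm_sub_norm_le _ _
  rw [szegoKernel, norm_inv]
  exact inv_anti₀ (by linarith) hb

end BlockToeplitz

open scoped ComplexConjugate

namespace BlockToeplitz


abbrev fb : HilbertBasis ℤ ℂ L2S := fourierBasis (T := 2*π)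

/-- Fourier coefficient of an L² element. -/
def fc (f : L2S) (n : ℤ) : ℂ := fourierCoeff (f : 𝕋 → ℂ) n

theorem fc_eq_repr (f : L2S) (n : ℤ) : fc f n = fb.repr f n := (fourierBasis_repr f n).symm

theorem fc_eq_inner (f : L2S) (n : ℤ) : fc f n = ⟪fourierLp 2 n, f⟫_ℂ := by
  rw [fc_eq_repr, fb.repr_apply_apply, coe_fourierBasis]

theorem ext_fc {f g : L2S} (h : ∀ n, fc f n = fc g n) : f = g := by
  apply fb.repr.injective
  ext n
  rw [← fc_eq_repr, ← fc_eq_repr, h]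

theorem fc_congr_ae {f : L2S} {g : 𝕋 → ℂ} (h : (f : 𝕋 → ℂ) =ᵐ[μ𝕋] g) (n : ℤ) :
    fc f n = fourierCoeff g n := by
  unfold fc fourierCoeff
  exact integral_congr_ae (h.mono fun x hx => by dsimp only; rw [hx])

theorem fc_fourierLp (k n : ℤ) : fc (fourierLp 2 k) n = if n = k then 1 else 0 := by
  rw [fc_eq_inner]
  have := orthonormal_iff_ite.mp (orthonormal_fourier (T := 2*π)) n k
  rw [this]

end BlockToeplitz

namespace BlockToeplitz

theorem mem_hardyS_iff {f : L2S} : f ∈ hardyS ↔ ∀ n < 0, fc f n = 0 := by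
  constructor
  · intro hf n hn
    rw [fc_eq_inner]
    exact (Submodule.mem_orthogonal _ _).mp hf _ (Submodule.subset_span ⟨n, hn, rfl⟩)
  · intro h
    rw [hardyS]
    rw [Submodule.mem_orthogonal]
    intro u hu
    refine Submodule.span_induction ?_ ?_ ?_ ?_ hu
    · rintro v ⟨k, hk, rfl⟩
      rw [← fc_eq_inner]
      exact h k hk
    · simp
    · intro x y _ _ hx hy
      rw [inner_add_left, hx, hy, add_zero]
    · intro a x _ hx
      rw [inner_smul_left, hx, mul_zero]

theorem fourierLp_mem_hardyS {k : ℤ} (hk : 0 ≤ k) : fourierLp 2 k ∈ hardyS := by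
  rw [mem_hardyS_iff]
  intro n hn
  rw [fc_fourierLp, if_neg (by omega)]

theorem fc_proj (f : L2S) (n : ℤ) :
    fc (↑(hardyProjS f)) n = if 0 ≤ n then fc f n else 0 := by
  split_ifs with h
  · have hmem : f - (hardyProjS f : L2S) ∈ hardySᗮ :=
      by have := hardyS.sub_starProjection_mem_orthogonal f; rw [starProjection_apply] at this; exact this
    have h0 : ⟪fourierLp 2 n, f - (hardyProjS f : L2S)⟫_ℂ = 0 :=
      (Submodule.mem_orthogonal _ _).mp hmem _ (fourierLp_mem_hardyS h)
    rw [inner_sub_right, sub_eq_zero] at h0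
    rw [fc_eq_inner, fc_eq_inner, h0]
  · exact mem_hardyS_iff.mp (hardyProjS f).2 n (by omega)

theorem fourier_neg_arg (m : ℤ) (x : 𝕋) : fourier m (-x) = fourier (-m) x := by
  rw [fourier_apply, fourier_apply, smul_neg, ← neg_smul]

theorem coeFn_Jop (f : L2S) :
    (Jop ℂ f : 𝕋 → ℂ) =ᵐ[μ𝕋] fun x => fourier (-1) x * (f : 𝕋 → ℂ) (-x) := by
  rw [Jop, ContinuousLinearMap.comp_apply, pointwiseCLM_apply]
  refine (MemLp.coeFn_toLp _).trans ?_
  have h1 : ((compNeg ℂ f : Lp ℂ 2 μ𝕋) : 𝕋 → ℂ) =ᵐ[μ𝕋] fun x => (f : 𝕋 → ℂ) (-x) := by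
    exact Lp.coeFn_compMeasurePreserving (μ := μ𝕋) (p := 2) f
      (Measure.measurePreserving_neg μ𝕋)
  filter_upwards [h1] with x hx
  simp only [hx, ContinuousLinearMap.smul_apply, ContinuousLinearMap.one_apply, smul_eq_mul]

theorem fc_Jop (f : L2S) (n : ℤ) : fc (Jop ℂ f) n = fc f (-(n + 1)) := by
  rw [fc_congr_ae (coeFn_Jop f) n]
  have hcv := (Measure.measurePreserving_neg μ𝕋).integral_comp
    (Homeomorph.neg 𝕋).measurableEmbedding
    (fun y => fourier (n + 1) y • ((f : 𝕋 → ℂ) y))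
  unfold fc fourierCoeff
  rw [show -(-(n + 1)) = n + 1 by ring, ← hcv]
  refine integral_congr_ae (Filter.Eventually.of_forall fun x => ?_)
  show fourier (-n) x • (fourier (-1) x * (f : 𝕋 → ℂ) (-x))
      = fourier (n + 1) (-x) • (f : 𝕋 → ℂ) (-x)
  rw [fourier_neg_arg, show (-(n + 1)) = -n + -1 by ring, fourier_add]
  simp only [smul_eq_mul]
  ring

theorem coeFn_mulLpS (φ : SymbolS) (f : L2S) :
    (φ.mulLp f : 𝕋 → ℂ) =ᵐ[μ𝕋] fun x => φ x * (f : 𝕋 → ℂ) x := by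
  rw [SymbolS.mulLp, pointwiseCLM_apply]
  refine (MemLp.coeFn_toLp _).trans ?_
  refine Filter.Eventually.of_forall fun x => ?_
  simp only [ContinuousLinearMap.smul_apply, ContinuousLinearMap.one_apply, smul_eq_mul]

theorem fc_hankelS (φ : SymbolS) (f : H2S) (n : ℤ) :
    fc (↑(hankelS φ f)) n
      = if 0 ≤ n then fourierCoeff (fun x => φ x * ((f : L2S) : 𝕋 → ℂ) x) (-(n + 1)) else 0 := by
  set g : L2S := φ.mulLp ↑f with hg
  set g2 : L2S := g - ↑(hardyProjS g) with hg2
  have hfc_g2 : ∀ k : ℤ, fc g2 k = if 0 ≤ k then 0 else fc g k := by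
    intro k
    have : fc g2 k = fc g k - fc (↑(hardyProjS g)) k := by
      rw [hg2, fc_eq_inner, fc_eq_inner, fc_eq_inner, inner_sub_right]
    rw [this, fc_proj]
    split_ifs <;> ring
  have hJ : ∀ m : ℤ, fc (Jop ℂ g2) m = if 0 ≤ m then fc g (-(m + 1)) else 0 := by
    intro m
    rw [fc_Jop, hfc_g2]
    split_ifs with h1 h2 h3 <;> first | rfl | omega
  have hJmem : Jop ℂ g2 ∈ hardyS := by
    rw [mem_hardyS_iff]
    intro m hm
    rw [hJ, if_neg (by omega)]
  have harg : hankelS φ f = hardyProjS (Jop ℂ g2) := by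
    rfl
  have hproj : (↑(hardyProjS (Jop ℂ g2)) : L2S) = Jop ℂ g2 := by
    rw [hardyProjS]
    rw [← starProjection_apply]
    exact starProjection_eq_self_iff.mpr hJmem
  rw [harg, hproj, hJ]
  split_ifs with h
  · exact fc_congr_ae (coeFn_mulLpS φ ↑f) _
  · rfl

theorem fourierCoeff_mul_fourier (g : 𝕋 → ℂ) (k n : ℤ) :
    fourierCoeff (fun x => g x * fourier k x) n = fourierCoeff g (n - k) := by
  unfold fourierCoeff
  refine integral_congr_ae (Filter.Eventually.of_forall fun x => ?_)
  simp only [smul_eq_mul]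
  rw [show (-(n - k)) = -n + k by ring, fourier_add]
  ring

theorem fourierCoeff_conj (g : 𝕋 → ℂ) (n : ℤ) :
    fourierCoeff (fun x => conj (g x)) n = conj (fourierCoeff g (-n)) := by
  unfold fourierCoeff
  rw [← integral_conj]
  refine integral_congr_ae (Filter.Eventually.of_forall fun x => ?_)
  simp only [smul_eq_mul, map_mul, neg_neg, ← fourier_neg]

end BlockToeplitz

namespace BlockToeplitz

theorem fourierCoeff_congr_ae {g h : 𝕋 → ℂ} (hgh : g =ᵐ[μ𝕋] h) (n : ℤ) :
    fourierCoeff g n = fourierCoeff h n :=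
  integral_congr_ae (hgh.mono fun x hx => by dsimp only; rw [hx])

theorem fc_zero (n : ℤ) : fc (0 : L2S) n = 0 := by
  rw [fc_eq_inner, inner_zero_right]

theorem fc_smul (c : ℂ) (f : L2S) (n : ℤ) : fc (c • f) n = c * fc f n := by
  rw [fc_eq_inner, fc_eq_inner, inner_smul_right]

theorem fc_add (f g : L2S) (n : ℤ) : fc (f + g) n = fc f n + fc g n := by
  rw [fc_eq_inner, fc_eq_inner, fc_eq_inner, inner_add_right]

theorem fourierCoeff_fourier (j i : ℤ) :
    fourierCoeff (⇑(fourier j) : 𝕋 → ℂ) i = if i = j then 1 else 0 := by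
  rw [← fourierCoeff_congr_ae (coeFn_fourierLp 2 j) i, ← fc, fc_fourierLp]

theorem fc_hankel_apply (φ : SymbolS) (n : ℤ) (hn : 0 ≤ n) (m : ℤ) :
    fc (↑(hankelS φ ⟨fourierLp 2 n, fourierLp_mem_hardyS hn⟩)) m
      = if 0 ≤ m then fourierCoeff φ.toFun (-(m + 1) - n) else 0 := by
  rw [fc_hankelS]
  split_ifs with h
  · have hae : (fun x => φ.toFun x * ((fourierLp 2 n : L2S) : 𝕋 → ℂ) x)
        =ᵐ[μ𝕋] fun x => φ.toFun x * fourier n x := by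
      filter_upwards [coeFn_fourierLp 2 n] with x hx
      rw [hx]
    rw [fourierCoeff_congr_ae hae, fourierCoeff_mul_fourier]
  · rfl

theorem inner_hankel_eq {φ ψ : SymbolS}
    (heq : ContinuousLinearMap.adjoint (hankelS φ) ∘L hankelS φ
      = ContinuousLinearMap.adjoint (hankelS ψ) ∘L hankelS ψ) (v : H2S) :
    ⟪hankelS φ v, hankelS φ v⟫_ℂ = ⟪hankelS ψ v, hankelS ψ v⟫_ℂ := by
  have h1 : ⟪v, (ContinuousLinearMap.adjoint (hankelS φ) ∘L hankelS φ) v⟫_ℂ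
      = ⟪hankelS φ v, hankelS φ v⟫_ℂ := by
    rw [ContinuousLinearMap.comp_apply, ContinuousLinearMap.adjoint_inner_right]
  have h2 : ⟪v, (ContinuousLinearMap.adjoint (hankelS ψ) ∘L hankelS ψ) v⟫_ℂ
      = ⟪hankelS ψ v, hankelS ψ v⟫_ℂ := by
    rw [ContinuousLinearMap.comp_apply, ContinuousLinearMap.adjoint_inner_right]
  rw [← h1, ← h2, heq]

theorem part2 (φ : SymbolS) (hφ : (φ.memLp2.toLp φ.toFun) ∈ hardyS)
    (heq : ContinuousLinearMap.adjoint (hankelS φ.conj) ∘L hankelS φ.conj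
      = ContinuousLinearMap.adjoint (hankelS coshiftSymbolS) ∘L hankelS coshiftSymbolS) :
    ∃ θ ∈ Set.Ico (0 : ℝ) (2 * π), ∃ β : ℂ,
      ∀ᵐ x ∂μ𝕋, φ.toFun x = Complex.exp (θ * Complex.I) * circleCoord x + β := by
  set a : ℤ → ℂ := fun n => fourierCoeff φ.toFun n with ha
  -- negative coefficients vanish
  have haneg : ∀ n < 0, a n = 0 := by
    intro n hn
    have := mem_hardyS_iff.mp hφ n hn
    rwa [fc_congr_ae (MemLp.coeFn_toLp φ.memLp2) n] at this
  -- coefficients of the conjugate symbol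
  have hconj : ∀ k : ℤ, fourierCoeff φ.conj.toFun k = conj (a (-k)) := by
    intro k
    exact fourierCoeff_conj φ.toFun k
  have hcoshift : ∀ k : ℤ, fourierCoeff coshiftSymbolS.toFun k = if k = -1 then 1 else 0 := by
    intro k
    exact fourierCoeff_fourier (-1) k
  -- the basis vectors of H²
  set e : ∀ n : ℤ, 0 ≤ n → H2S := fun n hn => ⟨fourierLp 2 n, fourierLp_mem_hardyS hn⟩ with he
  -- coefficients of H_{φ̄} e_n
  have hH : ∀ (n : ℤ) (hn : 0 ≤ n) (m : ℤ),
      fc (↑(hankelS φ.conj (e n hn))) m = if 0 ≤ m then conj (a (m + 1 + n)) else 0 := by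
    intro n hn m
    rw [he, fc_hankel_apply φ.conj n hn m, hconj]
    congr 2
    ring_nf
  have hH0 : ∀ (n : ℤ) (hn : 0 ≤ n) (m : ℤ),
      fc (↑(hankelS coshiftSymbolS (e n hn))) m
        = if m = 0 ∧ n = 0 then 1 else 0 := by
    intro n hn m
    rw [he, fc_hankel_apply coshiftSymbolS n hn m, hcoshift]
    split_ifs with h1 h2 h3 h4 <;> first | rfl | omega
  -- step 1 : a k = 0 for k ≥ 2
  have ha2 : ∀ k : ℤ, 2 ≤ k → a k = 0 := by
    intro k hk
    have hzero : hankelS coshiftSymbolS (e 1 (by norm_num)) = 0 := by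
      have : (↑(hankelS coshiftSymbolS (e 1 (by norm_num))) : L2S) = (0 : L2S) := by
        refine ext_fc fun m => ?_
        rw [hH0 1 (by norm_num) m, fc_zero, if_neg (by omega)]
      exact Subtype.ext this
    have h0 : ⟪hankelS φ.conj (e 1 (by norm_num)), hankelS φ.conj (e 1 (by norm_num))⟫_ℂ = 0 := by
      rw [inner_hankel_eq heq, hzero, inner_zero_right]
    have hz : hankelS φ.conj (e 1 (by norm_num)) = 0 := inner_self_eq_zero.mp h0
    have := hH 1 (by norm_num) (k - 2)
    rw [hz, if_pos (by omega)] at this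
    have hcoe : (↑((0 : H2S)) : L2S) = 0 := rfl
    rw [hcoe, fc_zero] at this
    have : conj (a (k - 2 + 1 + 1)) = 0 := this.symm
    have hk' : k - 2 + 1 + 1 = k := by ring
    rw [hk'] at this
    exact star_eq_zero.mp this
  -- step 2 : |a 1| = 1
  have hf00 : ⟪(fourierLp 2 (0:ℤ) : L2S), (fourierLp 2 (0:ℤ) : L2S)⟫_ℂ = 1 := by
    have := orthonormal_iff_ite.mp (orthonormal_fourier (T := 2*π)) 0 0
    rwa [if_pos rfl] at this
  have habs : a 1 * conj (a 1) = 1 := by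
    have hHe0 : (↑(hankelS φ.conj (e 0 le_rfl)) : L2S) = conj (a 1) • fourierLp 2 0 := by
      refine ext_fc fun m => ?_
      rw [hH 0 le_rfl m, fc_smul, fc_fourierLp]
      split_ifs with h1 h2 h3
      · subst h2; norm_num
      · rw [ha2 (m + 1 + 0) (by omega), map_zero, mul_zero]
      · omega
      · rw [mul_zero]
    have hH0e0 : (↑(hankelS coshiftSymbolS (e 0 le_rfl)) : L2S) = fourierLp 2 0 := by
      refine ext_fc fun m => ?_
      rw [hH0 0 le_rfl m, fc_fourierLp]
      split_ifs with h1 h2 h3 <;> first | rfl | omega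
    have hinner := inner_hankel_eq heq (e 0 le_rfl)
    rw [Submodule.coe_inner, Submodule.coe_inner, hHe0, hH0e0,
      inner_smul_left, inner_smul_right, hf00] at hinner
    rw [mul_one] at hinner
    calc a 1 * conj (a 1) = conj (conj (a 1)) * conj (a 1) := by rw [Complex.conj_conj]
      _ = 1 := hinner
  have habs1 : ‖a 1‖ = 1 := by
    have hn : Complex.normSq (a 1) = 1 := by
      have h := habs
      rw [Complex.mul_conj] at h
      exact_mod_cast h
    rw [Complex.normSq_eq_norm_sq] at hn
    nlinarith [norm_nonneg (a 1)]
  set α := a 1 with hα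
  set θ : ℝ := if 0 ≤ α.arg then α.arg else α.arg + 2 * π with hθ
  have hπ := Real.pi_pos
  have hθmem : θ ∈ Set.Ico (0 : ℝ) (2 * π) := by
    rw [hθ]
    split_ifs with h
    · exact ⟨h, lt_of_le_of_lt (Complex.arg_le_pi α) (by linarith)⟩
    · push_neg at h
      have := Complex.neg_pi_lt_arg α
      constructor <;> [linarith; linarith]
  have hexp : Complex.exp (θ * Complex.I) = α := by
    have hbase : Complex.exp (α.arg * Complex.I) = α := by
      have h := Complex.norm_mul_exp_arg_mul_I α
      rwa [habs1, Complex.ofReal_one, one_mul] at h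
    rw [hθ]
    split_ifs with h
    · exact hbase
    · have hc : ((α.arg + 2 * π : ℝ) : ℂ) * Complex.I
          = α.arg * Complex.I + 2 * π * Complex.I := by push_cast; ring
      rw [hc, Complex.exp_add, Complex.exp_two_pi_mul_I, mul_one, hbase]
  refine ⟨θ, hθmem, a 0, ?_⟩
  have hLp : φ.memLp2.toLp φ.toFun = α • fourierLp 2 1 + (a 0) • fourierLp 2 0 := by
    refine ext_fc fun n => ?_
    rw [fc_add, fc_smul, fc_smul, fc_fourierLp, fc_fourierLp,
      fc_congr_ae (MemLp.coeFn_toLp φ.memLp2) n]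
    by_cases h1 : n = 1
    · subst h1; norm_num; rfl
    by_cases h0 : n = 0
    · subst h0; norm_num; rfl
    rw [if_neg h1, if_neg h0, mul_zero, mul_zero, add_zero]
    rcases lt_or_ge n 0 with h | h
    · exact haneg n h
    · exact ha2 n (by omega)
  have h2 : ((α • fourierLp 2 1 + (a 0) • fourierLp 2 0 : L2S) : 𝕋 → ℂ)
      =ᵐ[μ𝕋] fun x => α * fourier 1 x + a 0 := by
    filter_upwards [Lp.coeFn_add (α • fourierLp 2 1) ((a 0) • fourierLp 2 0),
      Lp.coeFn_smul α (fourierLp 2 (1:ℤ) : L2S), Lp.coeFn_smul (a 0) (fourierLp 2 (0:ℤ) : L2S),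
      coeFn_fourierLp (T := 2*π) 2 1, coeFn_fourierLp (T := 2*π) 2 0] with x hadd hs1 hs0 hf1 hf0
    rw [hadd, Pi.add_apply, hs1, hs0, Pi.smul_apply, Pi.smul_apply, hf1, hf0,
      smul_eq_mul, smul_eq_mul, fourier_zero, mul_one]
  rw [← hLp] at h2
  filter_upwards [MemLp.coeFn_toLp φ.memLp2, h2] with x hx1 hx2
  rw [← hx1, hx2, hexp]
  rfl

end BlockToeplitz

namespace BlockToeplitz

theorem fourier_nat_pow (m : ℕ) (x : 𝕋) :
    (fourier (m : ℤ) x : ℂ) = (fourier 1 x : ℂ) ^ m := by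
  induction m with
  | zero => simp [fourier_zero]
  | succ k ih =>
    rw [show ((k + 1 : ℕ) : ℤ) = (k : ℤ) + 1 by push_cast; ring, fourier_add, ih, pow_succ]

theorem fc_szego (σ : ℂ) (hσ : ‖σ‖ < 1) (h : MemLp (szegoKernel σ) 2 μ𝕋) (n : ℤ) :
    fc (h.toLp (szegoKernel σ)) n
      = if 0 ≤ n then (conj σ) ^ n.toNat else 0 := by
  rw [fc_congr_ae (MemLp.coeFn_toLp h) n]
  set F : ℕ → 𝕋 → ℂ := fun m x => fourier (-n) x * ((conj σ) ^ m * fourier (m : ℤ) x) with hF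
  have hpt : ∀ x : 𝕋, fourier (-n) x • szegoKernel σ x = ∑' m : ℕ, F m x := by
    intro x
    have hlt : ‖conj σ * fourier 1 x‖ < 1 := by
      rw [norm_mul, RCLike.norm_conj, norm_fourier_apply, mul_one]
      exact hσ
    have hg := tsum_geometric_of_norm_lt_one hlt
    rw [szegoKernel, smul_eq_mul]
    show fourier (-n) x * (1 - conj σ * fourier 1 x)⁻¹ = _
    rw [← hg, ← tsum_mul_left]
    congr 1
    funext m
    rw [hF]
    dsimp only
    rw [mul_pow, fourier_nat_pow]
  have hFnorm : ∀ (m : ℕ) (x : 𝕋), ‖F m x‖ = ‖σ‖ ^ m := by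
    intro m x
    rw [hF]
    dsimp only
    rw [norm_mul, norm_mul, norm_fourier_apply, norm_fourier_apply, norm_pow, RCLike.norm_conj]
    ring
  have hFcont : ∀ m : ℕ, Continuous (F m) := by
    intro m
    exact (map_continuous (fourier (-n))).mul
      (continuous_const.mul (map_continuous (fourier (m : ℤ))))
  have hint : ∀ m : ℕ, Integrable (F m) μ𝕋 := by
    intro m
    refine memLp_one_iff_integrable.mp ?_
    refine MemLp.mono_exponent (q := ⊤) ?_ le_top
    exact memLp_top_of_bound (hFcont m).aestronglyMeasurable (‖σ‖ ^ m)
      (Filter.Eventually.of_forall fun x => (hFnorm m x).le)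
  have hsum : Summable fun m : ℕ => ∫ x : 𝕋, ‖F m x‖ ∂μ𝕋 := by
    have : (fun m : ℕ => ∫ x : 𝕋, ‖F m x‖ ∂μ𝕋) = fun m : ℕ => ‖σ‖ ^ m := by
      funext m
      simp_rw [hFnorm m]
      rw [integral_const, probReal_univ, one_smul]
    rw [this]
    exact summable_geometric_of_lt_one (norm_nonneg σ) hσ
  have hswap := integral_tsum_of_summable_integral_norm hint hsum
  have hev : ∀ m : ℕ, ∫ x : 𝕋, F m x ∂μ𝕋 = (conj σ) ^ m * (if n = (m : ℤ) then 1 else 0) := by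
    intro m
    rw [hF]
    dsimp only
    calc ∫ x : 𝕋, fourier (-n) x * ((conj σ) ^ m * fourier (m : ℤ) x) ∂μ𝕋
        = ∫ x : 𝕋, (conj σ) ^ m * (fourier (-n) x • (fourier (m : ℤ) x : ℂ)) ∂μ𝕋 := by
          refine integral_congr_ae (Filter.Eventually.of_forall fun x => ?_)
          simp only [smul_eq_mul]; ring
      _ = (conj σ) ^ m * fourierCoeff (⇑(fourier (m : ℤ)) : 𝕋 → ℂ) n := by
          rw [integral_const_mul]; rfl
      _ = (conj σ) ^ m * (if n = (m : ℤ) then 1 else 0) := by rw [fourierCoeff_fourier]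
  calc fourierCoeff (szegoKernel σ) n
      = ∫ x : 𝕋, ∑' m : ℕ, F m x ∂μ𝕋 :=
        integral_congr_ae (Filter.Eventually.of_forall hpt)
    _ = ∑' m : ℕ, ∫ x : 𝕋, F m x ∂μ𝕋 := hswap.symm
    _ = ∑' m : ℕ, (conj σ) ^ m * (if n = (m : ℤ) then 1 else 0) := by
        exact tsum_congr hev
    _ = if 0 ≤ n then (conj σ) ^ n.toNat else 0 := by
        split_ifs with h
        · rw [tsum_eq_single n.toNat]
          · rw [if_pos (by omega), mul_one]
          · intro m hm
            rw [if_neg (by omega), mul_zero]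
        · have hz : ∀ m : ℕ, (conj σ) ^ m * (if n = (m : ℤ) then 1 else 0) = 0 := fun m => by
            rw [if_neg (by omega), mul_zero]
          rw [tsum_congr hz, tsum_zero]

end BlockToeplitz

namespace BlockToeplitz

theorem fc_shiftMul (f : L2S) (n : ℤ) :
    fc (shiftSymbolS.mulLp f) n = fc f (n - 1) := by
  rw [fc_congr_ae (coeFn_mulLpS shiftSymbolS f) n]
  have hre : (fun x => shiftSymbolS.toFun x * (f : 𝕋 → ℂ) x)
      = fun x => (f : 𝕋 → ℂ) x * fourier 1 x := funext fun x => mul_comm _ _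
  rw [hre, fourierCoeff_mul_fourier]
  rfl

/-- The shift `f ↦ z f` on the Hardy space. -/
def Sop (f : H2S) : H2S :=
  ⟨shiftSymbolS.mulLp ↑f, by
    rw [mem_hardyS_iff]
    intro n hn
    rw [fc_shiftMul]
    exact mem_hardyS_iff.mp f.2 _ (by omega)⟩

theorem fc_Sop (f : H2S) (n : ℤ) : fc (↑(Sop f)) n = fc (↑f) (n - 1) := fc_shiftMul ↑f n

theorem hankel_shift (φ : SymbolS) (f : H2S) (m : ℤ) (hm : 0 ≤ m) :
    fc (↑(hankelS φ (Sop f))) m = fc (↑(hankelS φ f)) (m + 1) := by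
  rw [fc_hankelS, fc_hankelS, if_pos hm, if_pos (by omega)]
  have hae : (fun x => φ.toFun x * ((Sop f : L2S) : 𝕋 → ℂ) x)
      =ᵐ[μ𝕋] fun x => (φ.toFun x * (((f : L2S)) : 𝕋 → ℂ) x) * fourier 1 x := by
    filter_upwards [coeFn_mulLpS shiftSymbolS ↑f] with x hx
    have : ((Sop f : L2S) : 𝕋 → ℂ) x = shiftSymbolS.toFun x * ((f : L2S) : 𝕋 → ℂ) x := hx
    rw [this]
    show φ.toFun x * (fourier 1 x * _) = _
    ring
  rw [fourierCoeff_congr_ae hae, fourierCoeff_mul_fourier]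
  congr 1
  ring

/-- basis vectors -/
def eH (n : ℤ) (hn : 0 ≤ n) : H2S := ⟨fourierLp 2 n, fourierLp_mem_hardyS hn⟩

theorem Sop_eH (n : ℤ) (hn : 0 ≤ n) : Sop (eH n hn) = eH (n + 1) (by omega) := by
  refine Subtype.ext (ext_fc fun k => ?_)
  rw [fc_Sop]
  show fc (fourierLp 2 n) (k - 1) = fc (fourierLp 2 (n + 1)) k
  rw [fc_fourierLp, fc_fourierLp]
  split_ifs with h1 h2 h3 <;> first | rfl | omega

theorem inner_eH (w : H2S) (n : ℤ) (hn : 0 ≤ n) :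
    ⟪w, eH n hn⟫_ℂ = conj (fc (↑w) n) := by
  rw [Submodule.coe_inner]
  show ⟪(w : L2S), fourierLp 2 n⟫_ℂ = _
  rw [← inner_conj_symm, ← fc_eq_inner]

end BlockToeplitz

namespace BlockToeplitz

open scoped ENNReal in
theorem fc_decay (f : L2S) :
    Filter.Tendsto (fun m : ℕ => ‖fc f ((m : ℤ))‖ ^ (2:ℝ)) Filter.atTop (nhds 0) := by
  have hsum : Summable fun n : ℤ => ‖fb.repr f n‖ ^ (ENNReal.toReal 2) :=
    (memℓp_gen_iff (by norm_num)).mp (lp.memℓp (fb.repr f))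
  have h2 : (ENNReal.toReal 2) = (2:ℝ) := by norm_num
  rw [h2] at hsum
  have hsum2 : Summable fun m : ℕ => ‖fb.repr f ((m : ℤ))‖ ^ (2:ℝ) :=
    hsum.comp_injective Nat.cast_injective
  have := hsum2.tendsto_atTop_zero
  convert this using 2 with m
  rw [fc_eq_repr]

set_option synthInstance.maxHeartbeats 1000000 in
set_option maxHeartbeats 2000000 in
theorem part1 (φ : SymbolS)
    (hrank : Module.finrank ℂ ↥(LinearMap.range (hankelS φ : H2S →ₗ[ℂ] H2S)) = 1) :
    ∃ (ω : ℂ) (hω : ‖ω‖ < 1), ∃ c : ℂ, ∀ f : H2S,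
      ((hankelS φ f : L2S))
        = c • (((inner ℂ ((szegoKernel_memLp2 ω hω).toLp (szegoKernel ω)) ((f : L2S)) : ℂ)) •
            (szegoKernel_memLp2 (conj ω) (by simpa using hω)).toLp
              (szegoKernel (conj ω))) := by
  set T := hankelS φ with hT
  obtain ⟨v, hv0, hvspan⟩ := finrank_eq_one_iff'.mp hrank
  set u : H2S := (v : H2S) with hu
  have hu0 : u ≠ 0 := by
    intro h
    exact hv0 (Subtype.ext h)
  have hrange : ∀ g : H2S, ∃ c : ℂ, T g = c • u := by
    intro g
    have hmem : T g ∈ LinearMap.range (T : H2S →ₗ[ℂ] H2S) := ⟨g, rfl⟩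
    obtain ⟨c, hc⟩ := hvspan ⟨T g, hmem⟩
    refine ⟨c, ?_⟩
    have := congrArg (Subtype.val) hc
    exact this.symm
  have hdu : ⟪u, u⟫_ℂ ≠ 0 := inner_self_ne_zero.mpr hu0
  set d := (⟪u, u⟫_ℂ)⁻¹ with hd
  have hd0 : d ≠ 0 := inv_ne_zero hdu
  set w : H2S := ContinuousLinearMap.adjoint T u with hw
  have hTf : ∀ f : H2S, T f = (d * ⟪w, f⟫_ℂ) • u := by
    intro f
    obtain ⟨c, hc⟩ := hrange f
    have h1 : ⟪w, f⟫_ℂ = ⟪u, T f⟫_ℂ := ContinuousLinearMap.adjoint_inner_left T f u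
    rw [hc, show ⟪u, c • u⟫_ℂ = c * ⟪u, u⟫_ℂ from inner_smul_right u u c] at h1
    rw [hc]
    congr 1
    have hcalc : d * (c * ⟪u, u⟫_ℂ) = c := by
      rw [hd, show (⟪u, u⟫_ℂ)⁻¹ * (c * ⟪u, u⟫_ℂ) = c * (⟪u, u⟫_ℂ * (⟪u, u⟫_ℂ)⁻¹) from by ring,
        mul_inv_cancel₀ hdu, mul_one]
    rw [h1]
    exact hcalc.symm
  obtain ⟨g₀, hg₀⟩ : ∃ g : H2S, T g = u := v.2
  set p : ℤ → ℂ := fun m => fc (↑u) m with hp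
  have hpneg : ∀ m, m < 0 → p m = 0 := fun m hm => mem_hardyS_iff.mp u.2 m hm
  have hcg0 : d * ⟪w, g₀⟫_ℂ = 1 := by
    have h1 := hTf g₀
    rw [hg₀] at h1
    by_contra hne
    apply hu0
    have h2 : (1 - d * ⟪w, g₀⟫_ℂ) • u = 0 := by
      rw [sub_smul, one_smul]
      nth_rewrite 1 [h1]
      rw [sub_self]
    rcases smul_eq_zero.mp h2 with h | h
    · exact absurd (by linear_combination -h : d * ⟪w, g₀⟫_ℂ = 1) hne
    · exact h
  set lam : ℂ := d * ⟪w, Sop g₀⟫_ℂ with hlamdef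
  have hrec : ∀ m : ℤ, 0 ≤ m → p (m + 1) = lam * p m := by
    intro m hm
    have h1 := hankel_shift φ g₀ m hm
    rw [hg₀, hTf (Sop g₀)] at h1
    rw [← hlamdef] at h1
    have h2 : fc (↑(lam • u)) m = lam * p m := by
      rw [Submodule.coe_smul, fc_smul]
    rw [h2] at h1
    exact h1.symm
  have hgeo : ∀ m : ℤ, 0 ≤ m → p m = lam ^ m.toNat * p 0 := by
    intro m hm
    refine Int.le_induction (motive := fun n _ => p n = lam ^ n.toNat * p 0) ?_ ?_ m hm
    · simp
    · intro k hk ih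
      rw [hrec k hk, ih, show (k + 1).toNat = k.toNat + 1 by omega, pow_succ]
      ring
  have hp0 : p 0 ≠ 0 := by
    intro h
    apply hu0
    refine Subtype.ext (ext_fc fun n => ?_)
    rw [show ((0 : H2S) : L2S) = 0 from rfl, fc_zero]
    rcases lt_or_ge n 0 with hn | hn
    · exact hpneg n hn
    · rw [show fc (↑u) n = p n from rfl, hgeo n hn, h, mul_zero]
  have hlam : ‖lam‖ < 1 := by
    by_contra hge
    push_neg at hge
    have hdecay := fc_decay ↑u
    have hlb : ∀ m : ℕ, ‖p 0‖ ^ (2:ℝ) ≤ ‖fc (↑u) ((m : ℤ))‖ ^ (2:ℝ) := by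
      intro m
      have : fc (↑u) ((m : ℤ)) = lam ^ m * p 0 := by
        rw [show fc (↑u) ((m:ℤ)) = p ((m:ℤ)) from rfl, hgeo (m:ℤ) (by positivity),
          Int.toNat_natCast]
      rw [this, norm_mul, norm_pow]
      have h1 : (1:ℝ) ≤ ‖lam‖ ^ m := one_le_pow₀ hge
      have hnn : (0:ℝ) ≤ ‖p 0‖ := norm_nonneg _
      have h2 : ‖p 0‖ ≤ ‖lam‖ ^ m * ‖p 0‖ := le_mul_of_one_le_left hnn h1
      exact Real.rpow_le_rpow hnn h2 (by norm_num)
    have hle : ‖p 0‖ ^ (2:ℝ) ≤ 0 := ge_of_tendsto' hdecay hlb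
    have hpos : (0:ℝ) < ‖p 0‖ ^ (2:ℝ) := Real.rpow_pos_of_pos (norm_pos_iff.mpr hp0) _
    linarith
  set q : ℤ → ℂ := fun n => fc (↑w) n with hqdef
  have hqneg : ∀ n, n < 0 → q n = 0 := fun n hn => mem_hardyS_iff.mp w.2 n hn
  have hwS : ∀ f : H2S, ⟪w, Sop f⟫_ℂ = lam * ⟪w, f⟫_ℂ := by
    intro f
    have h1 := hankel_shift φ f 0 le_rfl
    rw [hTf (Sop f), hTf f, Submodule.coe_smul, Submodule.coe_smul, fc_smul, fc_smul] at h1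
    have hp1 : fc (↑u) ((0:ℤ) + 1) = lam * fc (↑u) 0 := hrec 0 le_rfl
    rw [hp1] at h1
    have hp0' : fc (↑u) (0:ℤ) ≠ 0 := hp0
    have h2 : (d * ⟪w, Sop f⟫_ℂ) * fc (↑u) 0 = (d * ⟪w, f⟫_ℂ * lam) * fc (↑u) 0 := by
      rw [h1]; ring
    have h3 := mul_right_cancel₀ hp0' h2
    have h4 : d * ⟪w, Sop f⟫_ℂ = d * (lam * ⟪w, f⟫_ℂ) := by rw [h3]; ring
    exact mul_left_cancel₀ hd0 h4
  have hqrec : ∀ n : ℤ, 0 ≤ n → q (n + 1) = conj lam * q n := by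
    intro n hn
    have h1 := hwS (eH n hn)
    rw [Sop_eH n hn, inner_eH w (n + 1) (by omega), inner_eH w n hn] at h1
    have h2 := congrArg conj h1
    rw [Complex.conj_conj, map_mul, Complex.conj_conj] at h2
    exact h2
  have hqgeo : ∀ n : ℤ, 0 ≤ n → q n = (conj lam) ^ n.toNat * q 0 := by
    intro n hn
    refine Int.le_induction (motive := fun k _ => q k = (conj lam) ^ k.toNat * q 0) ?_ ?_ n hn
    · simp
    · intro k hk ih
      rw [hqrec k hk, ih, show (k + 1).toNat = k.toNat + 1 by omega, pow_succ]
      ring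
  have hq0 : q 0 ≠ 0 := by
    intro h
    have hwz : w = 0 := by
      refine Subtype.ext (ext_fc fun n => ?_)
      rw [show ((0 : H2S) : L2S) = 0 from rfl, fc_zero]
      rcases lt_or_ge n 0 with hn | hn
      · exact hqneg n hn
      · rw [show fc (↑w) n = q n from rfl, hqgeo n hn, h, mul_zero]
    rw [hwz, inner_zero_left, mul_zero] at hcg0
    exact zero_ne_one hcg0
  refine ⟨lam, hlam, d * conj (q 0) * p 0, ?_⟩
  intro f
  set Kω : L2S := (szegoKernel_memLp2 lam hlam).toLp (szegoKernel lam) with hKωdef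
  have hwK : (↑w : L2S) = q 0 • Kω := by
    refine ext_fc fun n => ?_
    rw [fc_smul, hKωdef, fc_szego lam hlam]
    rcases lt_or_ge n 0 with hn | hn
    · rw [if_neg (by omega), mul_zero]
      exact hqneg n hn
    · rw [if_pos hn]
      rw [show fc (↑w) n = q n from rfl, hqgeo n hn]
      ring
  have hwf : ⟪w, f⟫_ℂ = conj (q 0) * ⟪Kω, (f : L2S)⟫_ℂ := by
    show ⟪(↑w : L2S), (f : L2S)⟫_ℂ = _
    rw [hwK, inner_smul_left]
  refine ext_fc fun n => ?_
  have hL : fc (↑(T f)) n = (d * ⟪w, f⟫_ℂ) * fc (↑u) n := by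
    rw [hTf f, Submodule.coe_smul, fc_smul]
  rw [hL, fc_smul, fc_smul, fc_szego (conj lam) (by simpa using hlam)]
  have hun : fc (↑u) n = (if 0 ≤ n then lam ^ n.toNat else 0) * p 0 := by
    rcases lt_or_ge n 0 with hn | hn
    · rw [if_neg (by omega), zero_mul]
      exact hpneg n hn
    · rw [if_pos hn]
      exact hgeo n hn
  rw [hun, hwf]
  simp only [Complex.conj_conj]
  split_ifs with hn
  · ring
  · ring

end BlockToeplitz


namespace BlockToeplitz
open scoped ComplexConjugate

/-- **Statement 16.** A rank-one Hankel operator on `H²` is a scalar multiple of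
`k_ω̄ ⊗ k_ω` for some `ω ∈ 𝔻`; consequently, if `H_φ̄* H_φ̄ = H_z̄* H_z̄` for `φ ∈ H²`,
then `φ = e^{iθ} z + β`. -/
theorem statement16 :
    (∀ φ : SymbolS, Module.finrank ℂ ↥(LinearMap.range (hankelS φ : H2S →ₗ[ℂ] H2S)) = 1 →
      ∃ (ω : ℂ) (hω : ‖ω‖ < 1), ∃ c : ℂ, ∀ f : H2S,
        ((hankelS φ f : L2S))
          = c • (((inner ℂ ((szegoKernel_memLp2 ω hω).toLp (szegoKernel ω)) ((f : L2S)) : ℂ)) •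
              (szegoKernel_memLp2 (conj ω) (by simpa using hω)).toLp
                (szegoKernel (conj ω)))) ∧
    (∀ φ : SymbolS, (φ.memLp2.toLp φ.toFun) ∈ hardyS →
      ContinuousLinearMap.adjoint (hankelS φ.conj) ∘L hankelS φ.conj
          = ContinuousLinearMap.adjoint (hankelS coshiftSymbolS) ∘L hankelS coshiftSymbolS →
      ∃ θ ∈ Set.Ico (0 : ℝ) (2 * π), ∃ β : ℂ,
        ∀ᵐ x ∂μ𝕋, φ.toFun x = Complex.exp (θ * Complex.I) * circleCoord x + β) := by
  exact ⟨fun φ hrank => part1 φ hrank, fun φ hφ heq => part2 φ hφ heq⟩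

end BlockToeplitz
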